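/- Define f(x) = (x - sin x cos x)(1 - cos 2x). There is an absolute constant C such that for all a, b ∈ ℝ: |f(a+b) - f(a) - f(b)| ≤ C(|a|⁴|b| + |a|³|b|² + |a|²|b|³ + |a||b|⁴). -/

import Mathlib

open Real

private lemma an_sin_cube (t : ℝ) : |t - Real.sin t| ≤ 2 * |t| ^ 3 := by
  rcases le_or_gt (|t|) 1 with h | h
  · have hb := Real.sin_bound h
    have h4 : |t| ^ 4 ≤ |t| ^ 3 := pow_le_pow_of_le_one (abs_nonneg t) h (by norm_num)
    have ht3 : |t ^ 3| = |t| ^ 3 := abs_pow t 3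
    calc |t - Real.sin t| = |(t ^ 3 / 6) - (Real.sin t - (t - t ^ 3 / 6))| := by ring_nf
      _ ≤ |t ^ 3 / 6| + |Real.sin t - (t - t ^ 3 / 6)| := abs_sub _ _
      _ ≤ |t| ^ 3 / 6 + |t| ^ 4 * (5 / 96) := by
          rw [abs_div, ht3]; gcongr <;> norm_num
          exact hb.trans (by nlinarith [mul_le_mul_of_nonneg_left h (pow_nonneg (abs_nonneg t) 4), pow_nonneg (abs_nonneg t) 4])
      _ ≤ 2 * |t| ^ 3 := by nlinarith [pow_nonneg (abs_nonneg t) 3]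
  · have hs : |Real.sin t| ≤ 1 := Real.abs_sin_le_one t
    have h3 : |t| ≤ |t| ^ 3 := le_self_pow₀ h.le (by norm_num)
    have h1 : |Real.sin t| ≤ |t| ^ 3 := hs.trans (h.le.trans h3)
    calc |t - Real.sin t| ≤ |t| + |Real.sin t| := abs_sub _ _
      _ ≤ 2 * |t| ^ 3 := by linarith

private lemma an_cos_sq (t : ℝ) : |1 - Real.cos t| ≤ 2 * t ^ 2 := by
  rcases le_or_gt (|t|) 1 with h | h
  · have hb := Real.cos_bound h
    have ht : |t| ^ 4 ≤ |t| ^ 2 := pow_le_pow_of_le_one (abs_nonneg t) h (by norm_num)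
    calc |1 - Real.cos t| = |(t ^ 2 / 2) - (Real.cos t - (1 - t ^ 2 / 2))| := by ring_nf
      _ ≤ |t ^ 2 / 2| + |Real.cos t - (1 - t ^ 2 / 2)| := abs_sub _ _
      _ ≤ t ^ 2 / 2 + |t| ^ 4 * (5 / 96) := by
          rw [abs_div, abs_pow, abs_two, sq_abs]; gcongr
      _ ≤ 2 * t ^ 2 := by nlinarith [sq_abs t, sq_nonneg t]
  · have hc : |Real.cos t| ≤ 1 := Real.abs_cos_le_one t
    have : 1 ≤ t ^ 2 := by nlinarith [sq_abs t]
    calc |1 - Real.cos t| ≤ |(1:ℝ)| + |Real.cos t| := abs_sub _ _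
      _ ≤ 2 := by rw [abs_one]; linarith
      _ ≤ 2 * t ^ 2 := by nlinarith

noncomputable def anF (x : ℝ) : ℝ := (x - Real.sin (2 * x) / 2) * (1 - Real.cos (2 * x))
noncomputable def anF1 (x : ℝ) : ℝ :=
  (1 - Real.cos (2 * x)) ^ 2 + (2 * x - Real.sin (2 * x)) * Real.sin (2 * x)
noncomputable def anF2 (x : ℝ) : ℝ :=
  6 * Real.sin (2 * x) * (1 - Real.cos (2 * x)) + 2 * Real.cos (2 * x) * (2 * x - Real.sin (2 * x))

private lemma hasDeriv_sin2 (x : ℝ) :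
    HasDerivAt (fun x : ℝ => Real.sin (2 * x)) (2 * Real.cos (2 * x)) x := by
  have h := (Real.hasDerivAt_sin (2 * x)).comp x ((hasDerivAt_id x).const_mul 2)
  rw [show (2:ℝ) * Real.cos (2 * x) = Real.cos (2 * x) * (2 * 1) by ring]
  exact h

private lemma hasDeriv_cos2 (x : ℝ) :
    HasDerivAt (fun x : ℝ => Real.cos (2 * x)) (-(2 * Real.sin (2 * x))) x := by
  have h := (Real.hasDerivAt_cos (2 * x)).comp x ((hasDerivAt_id x).const_mul 2)
  rw [show -(2 * Real.sin (2 * x)) = -Real.sin (2 * x) * (2 * 1) by ring]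
  exact h

private lemma hasDeriv_anF (x : ℝ) : HasDerivAt anF (anF1 x) x := by
  have hu : HasDerivAt (fun x : ℝ => x - Real.sin (2 * x) / 2) (1 - Real.cos (2 * x)) x := by
    simpa [Pi.sub_def] using (hasDerivAt_id x).sub ((hasDeriv_sin2 x).div_const 2)
  have hv : HasDerivAt (fun x : ℝ => 1 - Real.cos (2 * x)) (2 * Real.sin (2 * x)) x := by
    simpa [Pi.sub_def] using (hasDerivAt_const x (1:ℝ)).sub (hasDeriv_cos2 x)
  have := hu.mul hv
  exact this.congr_deriv (by unfold anF1; ring)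

private lemma hasDeriv_anF1 (x : ℝ) : HasDerivAt anF1 (anF2 x) x := by
  have hv : HasDerivAt (fun x : ℝ => 1 - Real.cos (2 * x)) (2 * Real.sin (2 * x)) x := by
    simpa [Pi.sub_def] using (hasDerivAt_const x (1:ℝ)).sub (hasDeriv_cos2 x)
  have h1 : HasDerivAt (fun x : ℝ => (1 - Real.cos (2 * x)) ^ 2)
      (2 * (1 - Real.cos (2 * x)) ^ 1 * (2 * Real.sin (2 * x))) x := by
    simpa [Pi.pow_def] using hv.pow 2
  have hw : HasDerivAt (fun x : ℝ => 2 * x - Real.sin (2 * x)) (2 - 2 * Real.cos (2 * x)) x := by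
    simpa [Pi.sub_def] using ((hasDerivAt_id x).const_mul 2).sub (hasDeriv_sin2 x)
  have h2 := hw.mul (hasDeriv_sin2 x)
  have := h1.add h2
  exact this.congr_deriv (by unfold anF2; ring)

private lemma anF2_bound (x : ℝ) : |anF2 x| ≤ 128 * |x| ^ 3 := by
  have hs : |Real.sin (2 * x)| ≤ 2 * |x| := by
    calc |Real.sin (2 * x)| ≤ |2 * x| := Real.abs_sin_le_abs
      _ = 2 * |x| := by rw [abs_mul, abs_two]
  have hc : |1 - Real.cos (2 * x)| ≤ 8 * x ^ 2 := by
    calc |1 - Real.cos (2 * x)| ≤ 2 * (2 * x) ^ 2 := an_cos_sq _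
      _ = 8 * x ^ 2 := by ring
  have ht : |2 * x - Real.sin (2 * x)| ≤ 16 * |x| ^ 3 := by
    calc |2 * x - Real.sin (2 * x)| ≤ 2 * |2 * x| ^ 3 := an_sin_cube _
      _ = 16 * |x| ^ 3 := by rw [abs_mul, abs_two]; ring
  have hcos : |Real.cos (2 * x)| ≤ 1 := Real.abs_cos_le_one _
  have hx2 : x ^ 2 = |x| ^ 2 := (sq_abs x).symm
  calc |anF2 x| ≤ 6 * |Real.sin (2 * x)| * |1 - Real.cos (2 * x)|
        + 2 * |Real.cos (2 * x)| * |2 * x - Real.sin (2 * x)| := by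
        unfold anF2
        calc _ ≤ |6 * Real.sin (2*x) * (1 - Real.cos (2*x))|
              + |2 * Real.cos (2*x) * (2*x - Real.sin (2*x))| := abs_add_le _ _
          _ = _ := by rw [abs_mul, abs_mul, abs_mul, abs_mul]; norm_num
    _ ≤ 6 * (2 * |x|) * (8 * x ^ 2) + 2 * 1 * (16 * |x| ^ 3) := by
        gcongr
    _ ≤ 128 * |x| ^ 3 := by rw [hx2]; nlinarith [abs_nonneg x]

private lemma abs_of_mem_uIcc {x y t : ℝ} (h : t ∈ Set.uIcc x y) : |t| ≤ max |x| |y| := by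
  rw [Set.mem_uIcc] at h
  rcases h with ⟨h1, h2⟩ | ⟨h1, h2⟩
  · exact abs_le_max_abs_abs h1 h2
  · exact (abs_le_max_abs_abs h1 h2).trans (by rw [max_comm])

private lemma key_est (a b : ℝ) :
    |anF (a + b) - anF a - anF b| ≤ 128 * (|a| + |b|) ^ 3 * (|b| * |a|) := by
  set R := |a| + |b| with hRdef
  have hRa : |a| ≤ R := le_add_of_nonneg_right (abs_nonneg b)
  have inner : ∀ t : ℝ, |t| ≤ |a| → |anF1 (t + b) - anF1 t| ≤ 128 * R ^ 3 * |b| := by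
    intro t ht
    have hmem : ∀ s ∈ Set.uIcc t (t + b), ‖anF2 s‖ ≤ 128 * R ^ 3 := by
      intro s hs
      have h1 : |s| ≤ max |t| |t + b| := abs_of_mem_uIcc hs
      have h2 : |t + b| ≤ |t| + |b| := abs_add_le t b
      have hsR : |s| ≤ R := by
        rcases max_cases |t| |t + b| with ⟨he, _⟩ | ⟨he, _⟩ <;> rw [he] at h1 <;> linarith
      rw [Real.norm_eq_abs]
      calc |anF2 s| ≤ 128 * |s| ^ 3 := anF2_bound s
        _ ≤ 128 * R ^ 3 := by gcongr
    have hmvt := Convex.norm_image_sub_le_of_norm_hasDerivWithin_le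
      (f := anF1) (f' := anF2) (s := Set.uIcc t (t + b))
      (fun s _ => (hasDeriv_anF1 s).hasDerivWithinAt) hmem
      (convex_uIcc _ _) Set.left_mem_uIcc Set.right_mem_uIcc
    simpa [Real.norm_eq_abs] using hmvt
  have houter : ∀ t ∈ Set.uIcc (0:ℝ) a,
      HasDerivWithinAt (fun t => anF (t + b) - anF t) (anF1 (t + b) - anF1 t)
        (Set.uIcc (0:ℝ) a) t := by
    intro t _
    have h1 : HasDerivAt (fun t : ℝ => anF (t + b)) (anF1 (t + b)) t := by
      have := (hasDeriv_anF (t + b)).comp t ((hasDerivAt_id t).add_const b)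
      simpa [Function.comp_def] using this
    exact (h1.sub (hasDeriv_anF t)).hasDerivWithinAt
  have hbound : ∀ t ∈ Set.uIcc (0:ℝ) a,
      ‖anF1 (t + b) - anF1 t‖ ≤ 128 * R ^ 3 * |b| := by
    intro t ht
    have h1 : |t| ≤ max |(0:ℝ)| |a| := abs_of_mem_uIcc ht
    have h2 : |t| ≤ |a| := by simpa using h1
    simpa [Real.norm_eq_abs] using inner t h2
  have hmvt2 := Convex.norm_image_sub_le_of_norm_hasDerivWithin_le houter hbound
    (convex_uIcc _ _) Set.left_mem_uIcc Set.right_mem_uIcc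
  have h0 : anF 0 = 0 := by unfold anF; norm_num
  calc |anF (a + b) - anF a - anF b|
      = ‖(anF (a + b) - anF a) - (anF (0 + b) - anF 0)‖ := by
        rw [Real.norm_eq_abs, zero_add, h0, sub_zero]
    _ ≤ 128 * R ^ 3 * |b| * ‖a - 0‖ := hmvt2
    _ = 128 * R ^ 3 * (|b| * |a|) := by rw [Real.norm_eq_abs, sub_zero]; ring

theorem stmt11 (f : ℝ → ℝ)
    (hf : ∀ x : ℝ, f x = (x - Real.sin x * Real.cos x) * (1 - Real.cos (2 * x))) :
    ∃ C : ℝ, 0 < C ∧ ∀ a b : ℝ,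
      |f (a + b) - f a - f b| ≤
        C * (|a| ^ 4 * |b| + |a| ^ 3 * |b| ^ 2 + |a| ^ 2 * |b| ^ 3 + |a| * |b| ^ 4) := by
  refine ⟨384, by norm_num, fun a b => ?_⟩
  have hfe : ∀ x, f x = anF x := by
    intro x
    rw [hf x]
    unfold anF
    rw [Real.sin_two_mul]
    ring
  rw [hfe, hfe, hfe]
  refine (key_est a b).trans ?_
  have ha := abs_nonneg a
  have hb := abs_nonneg b
  nlinarith [mul_nonneg (pow_nonneg ha 4) hb, mul_nonneg ha (pow_nonneg hb 4),
    mul_nonneg (pow_nonneg ha 3) (pow_nonneg hb 2),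
    mul_nonneg (pow_nonneg ha 2) (pow_nonneg hb 3)]
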